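/- Butterfly identity: for every 0 ≤ i < t, every 0 ≤ m < 2^i, and every x ∈ F, one has Δ_i^m(x + ω_{2^i}) = Δ_i^m(x) + Δ_{i+1}^{m+2^i}(x). -/

import Mathlib

open Polynomial Finset

attribute [local instance] ZMod.algebra

/-- `ω_i = Σ_{j<r} i_j · v_j`, where `i_j` are the binary digits of `i`. -/
noncomputable def omegaF {F : Type*} [Field F] {r : ℕ} (v : Fin r → F) (i : ℕ) : F :=
  ∑ j : Fin r, if Nat.testBit i (j : ℕ) then v j else 0

/-- The subspace vanishing polynomial `W_j(X) = ∏_{i=0}^{2^j-1} (X - ω_i)`. -/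
noncomputable def Wpoly {F : Type*} [Field F] {r : ℕ} (v : Fin r → F) (j : ℕ) : Polynomial F :=
  ∏ i ∈ Finset.range (2 ^ j), (Polynomial.X - Polynomial.C (omegaF v i))

/-- The basis polynomial `X_i(X) = ∏_{j<r} (W_j(X)/W_j(ω_{2^j}))^{i_j}`. -/
noncomputable def Xpoly {F : Type*} [Field F] {r : ℕ} (v : Fin r → F) (i : ℕ) : Polynomial F :=
  ∏ j ∈ Finset.range r,
    if Nat.testBit i j then
      Polynomial.C (((Wpoly v j).eval (omegaF v (2 ^ j)))⁻¹) * Wpoly v j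
    else 1

/-- The recursively defined polynomials `Δ_i^m`:
`Δ_t^m = C (d m)` and `Δ_i^m = Δ_{i+1}^m + (W_i/W_i(ω_{2^i})) · Δ_{i+1}^{m+2^i}` for `i < t`. -/
noncomputable def Delta {F : Type*} [Field F] {r : ℕ} (v : Fin r → F) (d : ℕ → F)
    (t i m : ℕ) : Polynomial F :=
  if i < t then
    Delta v d t (i + 1) m +
      Polynomial.C (((Wpoly v i).eval (omegaF v (2 ^ i)))⁻¹) * Wpoly v i *
        Delta v d t (i + 1) (m + 2 ^ i)
  else Polynomial.C (d m)
termination_by t - i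
decreasing_by all_goals omega

/-- The constant `W'_l = (∏_{j=1}^{2^l-1} ω_j) / W_l(ω_{2^l})`. -/
noncomputable def Wd {F : Type*} [Field F] {r : ℕ} (v : Fin r → F) (l : ℕ) : F :=
  (∏ j ∈ Finset.Ico 1 (2 ^ l), omegaF v j) / (Wpoly v l).eval (omegaF v (2 ^ l))

section Butterfly

variable {F : Type*} [Field F] [CharP F 2] {r : ℕ}

lemma two_pow_add_eq_xor' {j k : ℕ} (h : k < 2 ^ j) : 2 ^ j + k = 2 ^ j ^^^ k := by
  apply Nat.eq_of_testBit_eq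
  intro i
  have h1 := Nat.testBit_two_pow_mul_add 1 h i
  rw [Nat.mul_one] at h1
  rw [h1, Nat.testBit_xor]
  rcases lt_trichotomy i j with hij | rfl | hij
  · simp [hij, Nat.testBit_two_pow_of_ne (Nat.ne_of_gt hij)]
  · simp [Nat.testBit_lt_two_pow h, Nat.testBit_two_pow_self]
  · simp [Nat.not_lt.mpr hij.le, Nat.testBit_two_pow_of_ne (Nat.ne_of_lt hij),
      Nat.testBit_lt_two_pow (lt_trans h (Nat.pow_lt_pow_right one_lt_two hij)),
      Nat.testBit_lt_two_pow (show 1 < 2 ^ (i - j) by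
        have : 1 ≤ i - j := by omega
        calc 1 < 2 ^ 1 := by norm_num
        _ ≤ 2 ^ (i - j) := Nat.pow_le_pow_right (by norm_num) this)]

lemma omegaF_xor (v : Fin r → F) (a b : ℕ) :
    omegaF v (a ^^^ b) = omegaF v a + omegaF v b := by
  unfold omegaF
  rw [← Finset.sum_add_distrib]
  refine Finset.sum_congr rfl fun j _ => ?_
  rw [Nat.testBit_xor]
  cases ha : a.testBit j <;> cases hb : b.testBit j <;>
    simp [CharTwo.add_self_eq_zero]

lemma Wpoly_eval (v : Fin r → F) (j : ℕ) (x : F) :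
    (Wpoly v j).eval x = ∏ k ∈ Finset.range (2 ^ j), (x - omegaF v k) := by
  simp [Wpoly, eval_prod]

lemma Wpoly_eval_succ (v : Fin r → F) (j : ℕ) (x : F) :
    (Wpoly v (j + 1)).eval x
      = (Wpoly v j).eval x * (Wpoly v j).eval (x + omegaF v (2 ^ j)) := by
  rw [Wpoly_eval, Wpoly_eval, Wpoly_eval,
    show 2 ^ (j + 1) = 2 ^ j + 2 ^ j by ring, Finset.prod_range_add]
  congr 1
  refine Finset.prod_congr rfl fun k hk => ?_
  rw [Finset.mem_range] at hk
  rw [two_pow_add_eq_xor' hk, omegaF_xor]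
  simp only [CharTwo.sub_eq_add]
  ring

lemma Wpoly_eval_add (v : Fin r → F) (j : ℕ) (x y : F) :
    (Wpoly v j).eval (x + y) = (Wpoly v j).eval x + (Wpoly v j).eval y := by
  induction j generalizing x y with
  | zero =>
    simp [Wpoly_eval, omegaF]
  | succ j ih =>
    rw [Wpoly_eval_succ, Wpoly_eval_succ, Wpoly_eval_succ,
      show x + y + omegaF v (2 ^ j) = x + (y + omegaF v (2 ^ j)) by ring,
      ih x (y + omegaF v (2 ^ j)), ih x (omegaF v (2 ^ j)), ih y (omegaF v (2 ^ j)),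
      ih x y]
    have h2 : (2 : F) = 0 := CharTwo.two_eq_zero
    linear_combination (Wpoly v j).eval x * (Wpoly v j).eval y * h2

lemma Wpoly_eval_omega_two_pow (v : Fin r → F) {i l : ℕ} (h : i < l) :
    (Wpoly v l).eval (omegaF v (2 ^ i)) = 0 := by
  rw [Wpoly_eval]
  exact Finset.prod_eq_zero
    (Finset.mem_range.mpr (Nat.pow_lt_pow_right one_lt_two h)) (sub_self _)

lemma omegaF_ne_zero (v : Fin r → F) (hv : LinearIndependent (ZMod 2) v)
    {n : ℕ} (hn : n ≠ 0) (hn2 : n < 2 ^ r) : omegaF v n ≠ 0 := by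
  intro h0
  have key := Fintype.linearIndependent_iff.mp hv
    (fun j => if n.testBit (j : ℕ) then 1 else 0) ?_
  · obtain ⟨i, hi⟩ := Nat.exists_testBit_of_ne_zero hn
    have hir : i < r := by
      by_contra hcon
      have : n < 2 ^ i :=
        lt_of_lt_of_le hn2 (Nat.pow_le_pow_right (by norm_num) (Nat.le_of_not_lt hcon))
      rw [Nat.testBit_lt_two_pow this] at hi
      exact Bool.false_ne_true hi
    have := key ⟨i, hir⟩
    simp [hi] at this
  · rw [← h0]
    unfold omegaF
    refine Finset.sum_congr rfl fun j _ => ?_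
    by_cases hb : n.testBit (j : ℕ) <;> simp [hb]

lemma Wpoly_eval_self_ne (v : Fin r → F) (hv : LinearIndependent (ZMod 2) v)
    {i : ℕ} (hir : i < r) : (Wpoly v i).eval (omegaF v (2 ^ i)) ≠ 0 := by
  rw [Wpoly_eval]
  apply Finset.prod_ne_zero_iff.mpr
  intro k hk
  rw [Finset.mem_range] at hk
  rw [CharTwo.sub_eq_add, ← omegaF_xor]
  apply omegaF_ne_zero v hv
  · intro h
    have : 2 ^ i = k := by
      have := congrArg (· ^^^ k) h
      simpa [Nat.xor_assoc] using this
    omega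
  · rw [← two_pow_add_eq_xor' hk]
    calc 2 ^ i + k < 2 ^ i + 2 ^ i := by omega
    _ = 2 ^ (i + 1) := by ring
    _ ≤ 2 ^ r := Nat.pow_le_pow_right (by norm_num) hir

lemma Delta_eval_shift (v : Fin r → F) (d : ℕ → F) (t i j : ℕ) (hij : i < j)
    (m : ℕ) (x : F) :
    (Delta v d t j m).eval (x + omegaF v (2 ^ i)) = (Delta v d t j m).eval x := by
  rw [Delta]
  split_ifs with h
  · simp only [eval_add, eval_mul, eval_C]
    rw [Wpoly_eval_add, Wpoly_eval_omega_two_pow v hij, add_zero,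
      Delta_eval_shift v d t i (j + 1) (by omega) m x,
      Delta_eval_shift v d t i (j + 1) (by omega) (m + 2 ^ j) x]
  · simp
termination_by t - j
decreasing_by all_goals omega

end Butterfly

/-- Butterfly identity: for every `0 ≤ i < t`, `0 ≤ m < 2^i` and `x ∈ F`,
`Δ_i^m(x + ω_{2^i}) = Δ_i^m(x) + Δ_{i+1}^{m+2^i}(x)`. -/
theorem statement10 (r : ℕ) (hr : 1 ≤ r) (F : Type*) [Field F] [Fintype F] [CharP F 2]
    (hcard : Fintype.card F = 2 ^ r) (v : Fin r → F)
    (hv : LinearIndependent (ZMod 2) v) (t : ℕ) (ht1 : 1 ≤ t) (htr : t ≤ r) (d : ℕ → F) :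
    ∀ i < t, ∀ m < 2 ^ i, ∀ x : F,
      (Delta v d t i m).eval (x + omegaF v (2 ^ i))
        = (Delta v d t i m).eval x + (Delta v d t (i + 1) (m + 2 ^ i)).eval x := by
  intro i hi m hm x
  have hW := Wpoly_eval_self_ne v hv (lt_of_lt_of_le hi htr)
  rw [Delta]
  simp only [hi, if_true, eval_add, eval_mul, eval_C]
  rw [Wpoly_eval_add, Delta_eval_shift v d t i (i + 1) (by omega) m x,
    Delta_eval_shift v d t i (i + 1) (by omega) (m + 2 ^ i) x]
  field_simp
  ring
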